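/- For every α ∈ (0,1) and every β ∈ (0, π/2), the intersection of the level set C_α = {(w,z) : Φ(w)Φ(z) = α} with its counter-clockwise rotation by angle β about the origin consists of exactly one point. -/

import Mathlib

/-- The standard normal cumulative distribution function. -/
noncomputable def stdNormalCDF (w : ℝ) : ℝ :=
  ∫ x in Set.Iic w, (Real.sqrt (2 * Real.pi))⁻¹ * Real.exp (-x ^ 2 / 2)

open Real Set MeasureTheory Filter intervalIntegral

namespace SNHelper

noncomputable def pdf (x : ℝ) : ℝ := (Real.sqrt (2 * Real.pi))⁻¹ * Real.exp (-x ^ 2 / 2)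

lemma sqrt2pi_pos : 0 < Real.sqrt (2 * Real.pi) :=
  Real.sqrt_pos.2 (by positivity)

lemma pdf_pos (x : ℝ) : 0 < pdf x := by
  unfold pdf
  positivity

lemma pdf_cont : Continuous pdf := by
  unfold pdf
  fun_prop

lemma pdf_integrable : Integrable pdf := by
  have h : Integrable (fun x : ℝ => Real.exp (-(1/2 : ℝ) * x ^ 2)) :=
    integrable_exp_neg_mul_sq (by norm_num)
  have := h.const_mul ((Real.sqrt (2 * Real.pi))⁻¹)
  convert this using 2 with x
  unfold pdf
  ring_nf

lemma Φ_eq (w : ℝ) : stdNormalCDF w = ∫ x in Iic w, pdf x := rfl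

lemma integral_pdf : ∫ x, pdf x = 1 := by
  have h1 : (∫ x : ℝ, Real.exp (-(1/2 : ℝ) * x ^ 2)) = Real.sqrt (π / (1/2 : ℝ)) :=
    integral_gaussian (1/2 : ℝ)
  have h2 : (∫ x : ℝ, pdf x) = (Real.sqrt (2 * Real.pi))⁻¹ * ∫ x : ℝ, Real.exp (-(1/2 : ℝ) * x ^ 2) := by
    rw [← MeasureTheory.integral_const_mul]
    congr 1 with x
    unfold pdf
    ring_nf
  rw [h2, h1]
  have : π / (1/2 : ℝ) = 2 * π := by ring
  rw [this]
  field_simp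

lemma Φ_hasDerivAt (x : ℝ) : HasDerivAt stdNormalCDF (pdf x) x := by
  have key : stdNormalCDF = fun w => (∫ t in (0:ℝ)..w, pdf t) + stdNormalCDF 0 := by
    funext w
    have h := integral_Iic_sub_Iic (pdf_integrable.integrableOn (s := Iic 0))
      (pdf_integrable.integrableOn (s := Iic w))
    rw [Φ_eq, Φ_eq]
    linarith [h]
  rw [key]
  have h1 : HasDerivAt (fun w => ∫ t in (0:ℝ)..w, pdf t) (pdf x) x :=
    integral_hasDerivAt_right (pdf_integrable.intervalIntegrable)
      (pdf_cont.stronglyMeasurable.stronglyMeasurableAtFilter)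
      pdf_cont.continuousAt
  exact h1.add_const _

lemma Φ_cont : Continuous stdNormalCDF :=
  continuous_iff_continuousAt.2 fun x => (Φ_hasDerivAt x).continuousAt

lemma Φ_strictMono : StrictMono stdNormalCDF := by
  intro x y hxy
  have h := integral_Iic_sub_Iic (pdf_integrable.integrableOn (s := Iic x))
    (pdf_integrable.integrableOn (s := Iic y))
  have hpos : 0 < ∫ t in x..y, pdf t :=
    intervalIntegral.intervalIntegral_pos_of_pos
      (pdf_integrable.intervalIntegrable) (fun t => pdf_pos t) hxy
  rw [Φ_eq, Φ_eq]
  linarith [h]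

lemma Φ_nonneg (x : ℝ) : 0 ≤ stdNormalCDF x := by
  rw [Φ_eq]
  exact setIntegral_nonneg measurableSet_Iic (fun t _ => (pdf_pos t).le)

lemma Φ_pos (x : ℝ) : 0 < stdNormalCDF x :=
  lt_of_le_of_lt (Φ_nonneg (x - 1)) (Φ_strictMono (by linarith))

lemma Φ_tendsto_atTop : Tendsto stdNormalCDF atTop (nhds 1) := by
  have h := tendsto_setIntegral_of_monotone (f := pdf) (μ := volume)
    (s := fun w : ℝ => Iic w) (fun i => measurableSet_Iic)
    (fun a b hab => Iic_subset_Iic.2 hab)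
    (by rw [iUnion_Iic]; exact pdf_integrable.integrableOn)
  rw [iUnion_Iic, setIntegral_univ, integral_pdf] at h
  exact h

lemma Φ_tendsto_atBot : Tendsto stdNormalCDF atBot (nhds 0) := by
  have h := tendsto_setIntegral_of_antitone (f := pdf) (μ := volume)
    (s := fun w : ℝ => Iic (-w)) (fun i => measurableSet_Iic)
    (fun a b hab => Iic_subset_Iic.2 (by linarith))
    ⟨0, pdf_integrable.integrableOn⟩
  have hempty : (⋂ w : ℝ, Iic (-w)) = ∅ := by
    ext x
    simp only [mem_iInter, mem_Iic, mem_empty_iff_false, iff_false, not_forall]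
    exact ⟨-x + 1, by push_neg; linarith⟩
  rw [hempty, setIntegral_empty] at h
  have : Tendsto (fun w : ℝ => -w) atBot atTop := tendsto_neg_atBot_atTop
  have h2 := h.comp this
  have heq : stdNormalCDF = ((fun i : ℝ => ∫ x in Iic (-i), pdf x) ∘ fun w : ℝ => -w) := by
    funext w
    simp [Φ_eq, Function.comp]
  rw [heq]
  exact h2

lemma Φ_lt_one (x : ℝ) : stdNormalCDF x < 1 := by
  have h := integral_Iic_add_Ioi (b := x) (pdf_integrable.integrableOn)
    (pdf_integrable.integrableOn)
  rw [integral_pdf] at h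
  have h2 : (∫ t in x..(x+1), pdf t) ≤ ∫ t in Ioi x, pdf t := by
    rw [intervalIntegral.integral_of_le (by linarith)]
    exact setIntegral_mono_set pdf_integrable.integrableOn
      (Eventually.of_forall fun t => (pdf_pos t).le)
      (HasSubset.Subset.eventuallyLE Ioc_subset_Ioi_self)
  have hpos : 0 < ∫ t in x..(x+1), pdf t :=
    intervalIntegral.intervalIntegral_pos_of_pos
      (pdf_integrable.intervalIntegrable) (fun t => pdf_pos t) (by linarith)
  rw [Φ_eq]
  linarith

noncomputable def millsAux (x : ℝ) : ℝ := stdNormalCDF x + x * pdf x / (x ^ 2 + 1)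

lemma pdf_hasDerivAt (x : ℝ) : HasDerivAt pdf (-x * pdf x) x := by
  have h1 : HasDerivAt (fun x : ℝ => x ^ 2) (2 * x) x := by
    simpa using hasDerivAt_pow 2 x
  have h : HasDerivAt (fun x : ℝ => -x ^ 2 / 2) (-x) x := by
    have := (h1.neg).div_const 2
    exact this.congr_deriv (by ring)
  have h2 := (h.exp).const_mul ((Real.sqrt (2 * Real.pi))⁻¹)
  exact h2.congr_deriv (by unfold pdf; ring)

lemma millsAux_hasDerivAt (x : ℝ) :
    HasDerivAt millsAux (2 * pdf x / (x ^ 2 + 1) ^ 2) x := by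
  have h1 := Φ_hasDerivAt x
  have h2 : HasDerivAt (fun x : ℝ => x * pdf x) (pdf x + x * (-x * pdf x)) x := by
    have := (hasDerivAt_id x).mul (pdf_hasDerivAt x)
    refine this.congr_deriv ?_
    simp only [id_eq]
    ring
  have h3 : HasDerivAt (fun x : ℝ => x ^ 2 + 1) (2 * x) x := by
    simpa using (hasDerivAt_pow 2 x).add_const 1
  have h4 := h2.div h3 (by positivity)
  have h5 := h1.add h4
  refine h5.congr_deriv ?_
  have hne : (x:ℝ) ^ 2 + 1 ≠ 0 := by positivity
  unfold pdf
  field_simp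
  ring

lemma millsAux_strictMono : StrictMono millsAux :=
  strictMono_of_deriv_pos fun x => by
    rw [(millsAux_hasDerivAt x).deriv]
    exact div_pos (by linarith [pdf_pos x]) (by positivity)

lemma pdf_tendsto_atBot : Tendsto pdf atBot (nhds 0) := by
  have hexp : Tendsto (fun x : ℝ => Real.exp x) atBot (nhds 0) := Real.tendsto_exp_atBot
  have h2 : Tendsto (fun x : ℝ => Real.exp (-x ^ 2 / 2)) atBot (nhds 0) := by
    apply tendsto_of_tendsto_of_tendsto_of_le_of_le' tendsto_const_nhds hexp
    · exact Eventually.of_forall fun x => (Real.exp_pos _).le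
    · filter_upwards [eventually_le_atBot (-2 : ℝ)] with x hx
      apply Real.exp_le_exp.2
      nlinarith
  have h3 := h2.const_mul ((Real.sqrt (2 * Real.pi))⁻¹)
  rw [mul_zero] at h3
  exact h3

lemma millsAux_tendsto_atBot : Tendsto millsAux atBot (nhds 0) := by
  have h2 : Tendsto (fun x : ℝ => x * pdf x / (x ^ 2 + 1)) atBot (nhds 0) := by
    apply tendsto_of_tendsto_of_tendsto_of_le_of_le
      (g := fun x : ℝ => -pdf x) (h := pdf)
      (by simpa using pdf_tendsto_atBot.neg) pdf_tendsto_atBot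
    · intro x
      have hp := pdf_pos x
      rw [le_div_iff₀ (by positivity)]
      show (-pdf x) * (x ^ 2 + 1) ≤ x * pdf x
      have h5 : (0:ℝ) < x ^ 2 + x + 1 := by nlinarith [sq_nonneg (2 * x + 1)]
      nlinarith [mul_pos hp h5]
    · intro x
      have hp := pdf_pos x
      rw [div_le_iff₀ (by positivity)]
      show x * pdf x ≤ pdf x * (x ^ 2 + 1)
      have h5 : (0:ℝ) < x ^ 2 - x + 1 := by nlinarith [sq_nonneg (2 * x - 1)]
      nlinarith [mul_pos hp h5]
  have h := Φ_tendsto_atBot.add h2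
  rw [add_zero] at h
  exact h

lemma millsAux_pos (x : ℝ) : 0 < millsAux x := by
  have h0 : 0 ≤ millsAux (x - 1) := by
    apply le_of_tendsto millsAux_tendsto_atBot
    exact eventually_atBot.2 ⟨x - 1, fun y hy => millsAux_strictMono.monotone hy⟩
  exact lt_of_le_of_lt h0 (millsAux_strictMono (by linarith))

lemma mills (x : ℝ) : 0 < (x ^ 2 + 1) * stdNormalCDF x + x * pdf x := by
  have h := millsAux_pos x
  have hne : (0:ℝ) < x ^ 2 + 1 := by positivity
  have h2 := mul_pos hne h
  unfold millsAux at h2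
  rw [mul_add, mul_div_cancel₀ _ (ne_of_gt hne)] at h2
  linarith


noncomputable def rho (x : ℝ) : ℝ := -x * stdNormalCDF x / pdf x

lemma rho_hasDerivAt (x : ℝ) :
    HasDerivAt rho (-(((x ^ 2 + 1) * stdNormalCDF x + x * pdf x) / pdf x)) x := by
  have hnum : HasDerivAt (fun x : ℝ => -x * stdNormalCDF x)
      (-stdNormalCDF x + -x * pdf x) x := by
    have := ((hasDerivAt_id x).neg).mul (Φ_hasDerivAt x)
    refine this.congr_deriv ?_
    simp only [Pi.neg_apply, id_eq]
    ring
  have h := hnum.div (pdf_hasDerivAt x) (ne_of_gt (pdf_pos x))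
  refine h.congr_deriv ?_
  have hp := pdf_pos x
  field_simp
  ring

lemma rho_strictAnti : StrictAnti rho :=
  strictAnti_of_deriv_neg fun x => by
    rw [(rho_hasDerivAt x).deriv]
    exact neg_neg_iff_pos.mpr (div_pos (mills x) (pdf_pos x)) |>.le.lt_of_ne (by
      exact ne_of_lt (neg_lt_zero.mpr (div_pos (mills x) (pdf_pos x))))

lemma key {x y : ℝ} (hxy : x < y) :
    x * pdf y * stdNormalCDF x < y * pdf x * stdNormalCDF y := by
  have h := rho_strictAnti hxy
  unfold rho at h
  rw [div_lt_div_iff₀ (pdf_pos y) (pdf_pos x)] at h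
  nlinarith [h]


lemma G_hasDerivAt (r θ : ℝ) :
    HasDerivAt (fun t => stdNormalCDF (r * Real.cos t) * stdNormalCDF (r * Real.sin t))
      (r * Real.cos θ * pdf (r * Real.sin θ) * stdNormalCDF (r * Real.cos θ)
        - r * Real.sin θ * pdf (r * Real.cos θ) * stdNormalCDF (r * Real.sin θ)) θ := by
  have hc : HasDerivAt (fun t : ℝ => r * Real.cos t) (r * -Real.sin θ) θ :=
    (Real.hasDerivAt_cos θ).const_mul r
  have hs : HasDerivAt (fun t : ℝ => r * Real.sin t) (r * Real.cos θ) θ :=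
    (Real.hasDerivAt_sin θ).const_mul r
  have h1 : HasDerivAt (fun t : ℝ => stdNormalCDF (r * Real.cos t))
      (pdf (r * Real.cos θ) * (r * -Real.sin θ)) θ := (Φ_hasDerivAt _).comp θ hc
  have h2 : HasDerivAt (fun t : ℝ => stdNormalCDF (r * Real.sin t))
      (pdf (r * Real.sin θ) * (r * Real.cos θ)) θ := (Φ_hasDerivAt _).comp θ hs
  have h3 := h1.mul h2
  refine h3.congr_deriv ?_
  ring

lemma G_cont (r : ℝ) :
    Continuous (fun t => stdNormalCDF (r * Real.cos t) * stdNormalCDF (r * Real.sin t)) := by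
  exact ((Φ_cont.comp (continuous_const.mul Real.continuous_cos)).mul
    (Φ_cont.comp (continuous_const.mul Real.continuous_sin)))

lemma G_anti (r : ℝ) (hr : 0 < r) :
    StrictAntiOn (fun t => stdNormalCDF (r * Real.cos t) * stdNormalCDF (r * Real.sin t))
      (Icc (π/4) (5*π/4)) := by
  apply strictAntiOn_of_deriv_neg (convex_Icc _ _) (G_cont r).continuousOn
  intro θ hθ
  rw [interior_Icc] at hθ
  rw [(G_hasDerivAt r θ).deriv]
  have h1 : Real.cos θ < Real.sin θ := by
    have h0 : 0 < Real.sin (θ - π/4) :=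
      Real.sin_pos_of_pos_of_lt_pi (by linarith [hθ.1]) (by linarith [hθ.2])
    rw [Real.sin_sub, Real.cos_pi_div_four, Real.sin_pi_div_four] at h0
    nlinarith [Real.sqrt_pos.2 (show (0:ℝ) < 2 by norm_num)]
  have h2 := key (mul_lt_mul_of_pos_left h1 hr)
  linarith [h2]

lemma G_mono (r : ℝ) (hr : 0 < r) :
    StrictMonoOn (fun t => stdNormalCDF (r * Real.cos t) * stdNormalCDF (r * Real.sin t))
      (Icc (5*π/4) (9*π/4)) := by
  apply strictMonoOn_of_deriv_pos (convex_Icc _ _) (G_cont r).continuousOn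
  intro θ hθ
  rw [interior_Icc] at hθ
  rw [(G_hasDerivAt r θ).deriv]
  have h1 : Real.sin θ < Real.cos θ := by
    have h0 : Real.sin (θ - π/4 - 2*π) < 0 :=
      Real.sin_neg_of_neg_of_neg_pi_lt (by linarith [hθ.2]) (by linarith [hθ.1])
    rw [Real.sin_sub_two_pi, Real.sin_sub, Real.cos_pi_div_four, Real.sin_pi_div_four] at h0
    nlinarith [Real.sqrt_pos.2 (show (0:ℝ) < 2 by norm_num)]
  have h2 := key (mul_lt_mul_of_pos_left h1 hr)
  linarith [h2]

lemma pair_straddle (r : ℝ) (hr : 0 < r) {θ₁ θ₂ : ℝ}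
    (h₁ : θ₁ ∈ Ico (π/4) (9*π/4)) (h₂ : θ₂ ∈ Ico (π/4) (9*π/4)) (hne : θ₁ ≠ θ₂)
    (hG : stdNormalCDF (r * Real.cos θ₁) * stdNormalCDF (r * Real.sin θ₁)
        = stdNormalCDF (r * Real.cos θ₂) * stdNormalCDF (r * Real.sin θ₂)) :
    (θ₁ < 5*π/4 ∧ 5*π/4 < θ₂) ∨ (θ₂ < 5*π/4 ∧ 5*π/4 < θ₁) := by
  rcases lt_or_ge θ₁ (5*π/4) with ha | ha <;> rcases lt_or_ge θ₂ (5*π/4) with hb | hb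
  · exact absurd ((G_anti r hr).injOn ⟨h₁.1, ha.le⟩ ⟨h₂.1, hb.le⟩ hG) hne
  · rcases eq_or_lt_of_le hb with hb' | hb'
    · exact absurd ((G_anti r hr).injOn ⟨h₁.1, ha.le⟩ ⟨h₂.1, hb'.ge⟩ hG) hne
    · exact Or.inl ⟨ha, hb'⟩
  · rcases eq_or_lt_of_le ha with ha' | ha'
    · exact absurd ((G_anti r hr).injOn ⟨h₁.1, ha'.ge⟩ ⟨h₂.1, hb.le⟩ hG) hne
    · exact Or.inr ⟨hb, ha'⟩
  · exact absurd ((G_mono r hr).injOn ⟨ha, h₁.2.le⟩ ⟨hb, h₂.2.le⟩ hG) hne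

lemma angles3 (r : ℝ) (hr : 0 < r) {θ₁ θ₂ θ₃ : ℝ}
    (h₁ : θ₁ ∈ Ico (π/4) (9*π/4)) (h₂ : θ₂ ∈ Ico (π/4) (9*π/4)) (h₃ : θ₃ ∈ Ico (π/4) (9*π/4))
    (h12 : θ₁ ≠ θ₂) (h13 : θ₁ ≠ θ₃) (h23 : θ₂ ≠ θ₃)
    (e12 : stdNormalCDF (r * Real.cos θ₁) * stdNormalCDF (r * Real.sin θ₁)
        = stdNormalCDF (r * Real.cos θ₂) * stdNormalCDF (r * Real.sin θ₂))
    (e13 : stdNormalCDF (r * Real.cos θ₁) * stdNormalCDF (r * Real.sin θ₁)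
        = stdNormalCDF (r * Real.cos θ₃) * stdNormalCDF (r * Real.sin θ₃)) : False := by
  have s12 := pair_straddle r hr h₁ h₂ h12 e12
  have s13 := pair_straddle r hr h₁ h₃ h13 e13
  have s23 := pair_straddle r hr h₂ h₃ h23 (e12 ▸ e13)
  rcases s12 with ⟨u1, u2⟩ | ⟨u1, u2⟩ <;> rcases s13 with ⟨v1, v2⟩ | ⟨v1, v2⟩ <;>
    rcases s23 with ⟨w1, w2⟩ | ⟨w1, w2⟩ <;> linarith

lemma exists_angle {w z r : ℝ} (hr : 0 < r) (h : w ^ 2 + z ^ 2 = r ^ 2) :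
    ∃ θ ∈ Ico (π/4) (9*π/4), w = r * Real.cos θ ∧ z = r * Real.sin θ := by
  have pi_pos := Real.pi_pos
  set ζ : ℂ := ⟨w, z⟩ with hζdef
  have habs : ‖ζ‖ = r := by
    rw [Complex.norm_def, Complex.normSq_mk]
    rw [show w * w + z * z = r ^ 2 by rw [← h]; ring]
    exact Real.sqrt_sq hr.le
  have hζ : ζ ≠ 0 := by
    intro h0
    rw [h0, norm_zero] at habs
    exact absurd habs.symm (ne_of_gt hr)
  have hcos : Real.cos (Complex.arg ζ) = w / r := by
    rw [Complex.cos_arg hζ, habs]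
  have hsin : Real.sin (Complex.arg ζ) = z / r := by
    rw [Complex.sin_arg, habs]
  have hb1 : -π < Complex.arg ζ := Complex.neg_pi_lt_arg ζ
  have hb2 : Complex.arg ζ ≤ π := Complex.arg_le_pi ζ
  by_cases hcase : π/4 ≤ Complex.arg ζ
  · refine ⟨Complex.arg ζ, ⟨hcase, by linarith⟩, ?_, ?_⟩
    · rw [hcos]; field_simp
    · rw [hsin]; field_simp
  · refine ⟨Complex.arg ζ + 2*π, ⟨by linarith, by push_neg at hcase; linarith⟩, ?_, ?_⟩
    · rw [Real.cos_add_two_pi, hcos]; field_simp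
    · rw [Real.sin_add_two_pi, hsin]; field_simp


lemma three_points {r A : ℝ} (hr : 0 < r) (u v w : ℝ × ℝ)
    (hu : u.1 ^ 2 + u.2 ^ 2 = r ^ 2) (hv : v.1 ^ 2 + v.2 ^ 2 = r ^ 2)
    (hw : w.1 ^ 2 + w.2 ^ 2 = r ^ 2)
    (hAu : stdNormalCDF u.1 * stdNormalCDF u.2 = A)
    (hAv : stdNormalCDF v.1 * stdNormalCDF v.2 = A)
    (hAw : stdNormalCDF w.1 * stdNormalCDF w.2 = A)
    (duv : u ≠ v) (duw : u ≠ w) (dvw : v ≠ w) : False := by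
  obtain ⟨θu, hθu, hu1, hu2⟩ := exists_angle hr hu
  obtain ⟨θv, hθv, hv1, hv2⟩ := exists_angle hr hv
  obtain ⟨θw, hθw, hw1, hw2⟩ := exists_angle hr hw
  have hne : ∀ {a b : ℝ × ℝ} {θa θb : ℝ}, a ≠ b → a.1 = r * Real.cos θa →
      a.2 = r * Real.sin θa → b.1 = r * Real.cos θb → b.2 = r * Real.sin θb → θa ≠ θb := by
    intro a b θa θb hab ha1 ha2 hb1 hb2 h
    exact hab (Prod.ext (by rw [ha1, hb1, h]) (by rw [ha2, hb2, h]))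
  apply angles3 r hr hθu hθv hθw (hne duv hu1 hu2 hv1 hv2) (hne duw hu1 hu2 hw1 hw2)
    (hne dvw hv1 hv2 hw1 hw2)
  · rw [← hu1, ← hu2, ← hv1, ← hv2, hAu, hAv]
  · rw [← hu1, ← hu2, ← hw1, ← hw2, hAu, hAw]

end SNHelper

open SNHelper in
theorem stmt16 (α β : ℝ) (hα : α ∈ Set.Ioo (0 : ℝ) 1) (hβ : β ∈ Set.Ioo 0 (Real.pi / 2)) :
    ∃! p : ℝ × ℝ,
      stdNormalCDF p.1 * stdNormalCDF p.2 = α ∧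
      ∃ q : ℝ × ℝ, stdNormalCDF q.1 * stdNormalCDF q.2 = α ∧
        p.1 = q.1 * Real.cos β - q.2 * Real.sin β ∧
        p.2 = q.1 * Real.sin β + q.2 * Real.cos β := by
  obtain ⟨hα0, hα1⟩ := hα
  obtain ⟨hβ0, hβ1⟩ := hβ
  have pi_pos := Real.pi_pos
  obtain ⟨γ, hγdef⟩ : ∃ x : ℝ, x = π/4 + β/2 := ⟨_, rfl⟩
  have hγ1 : 0 < γ := by rw [hγdef]; linarith
  have hγ2 : γ < π/2 := by rw [hγdef]; linarith
  obtain ⟨c', hc'def⟩ : ∃ x : ℝ, x = Real.cos γ := ⟨_, rfl⟩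
  obtain ⟨s', hs'def⟩ : ∃ x : ℝ, x = Real.sin γ := ⟨_, rfl⟩
  have hc' : 0 < c' := hc'def ▸ Real.cos_pos_of_mem_Ioo ⟨by linarith, hγ2⟩
  have hs' : 0 < s' := hs'def ▸ Real.sin_pos_of_pos_of_lt_pi hγ1 (by linarith)
  have hpyth : s' ^ 2 + c' ^ 2 = 1 := by rw [hc'def, hs'def]; exact Real.sin_sq_add_cos_sq γ
  have hβγ : β = 2*γ - π/2 := by rw [hγdef]; ring
  have id1 : Real.cos β = 2*s'*c' := by
    rw [hc'def, hs'def, hβγ, Real.cos_sub_pi_div_two, Real.sin_two_mul]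
  have id2 : Real.sin β = 1 - 2*c'^2 := by
    rw [hc'def, hβγ, Real.sin_sub_pi_div_two, Real.cos_two_mul]; ring
  have hsb : 0 < Real.sin β := Real.sin_pos_of_pos_of_lt_pi hβ0 (by linarith)
  have hsc : Real.sin β ^ 2 + Real.cos β ^ 2 = 1 := Real.sin_sq_add_cos_sq β
  have hcb1 : Real.cos β < 1 := by
    nlinarith [pow_pos hsb 2, sq_nonneg (Real.cos β - 1)]
  obtain ⟨m, hmdef⟩ : ∃ f : ℝ → ℝ, f = fun t => stdNormalCDF (t*c') * stdNormalCDF (t*s') :=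
    ⟨_, rfl⟩
  have hmono : StrictMono m := by
    intro t u htu
    have h1 := Φ_strictMono (mul_lt_mul_of_pos_right htu hc')
    have h2 := Φ_strictMono (mul_lt_mul_of_pos_right htu hs')
    have g1 := Φ_pos (t*c'); have g2 := Φ_pos (t*s')
    have g3 := Φ_pos (u*c'); have g4 := Φ_pos (u*s')
    simp only [hmdef]
    nlinarith
  have hmcont : Continuous m := by
    rw [hmdef]
    apply Continuous.mul
    · exact Φ_cont.comp (continuous_id.mul continuous_const)
    · exact Φ_cont.comp (continuous_id.mul continuous_const)
  have htop : Tendsto m atTop (nhds 1) := by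
    rw [hmdef]
    have h1 : Tendsto (fun t : ℝ => t * c') atTop atTop :=
      Tendsto.atTop_mul_const hc' tendsto_id
    have h2 : Tendsto (fun t : ℝ => t * s') atTop atTop :=
      Tendsto.atTop_mul_const hs' tendsto_id
    have h3 := (Φ_tendsto_atTop.comp h1).mul (Φ_tendsto_atTop.comp h2)
    simpa using h3
  have hbot : Tendsto m atBot (nhds 0) := by
    rw [hmdef]
    have h1 : Tendsto (fun t : ℝ => t * c') atBot atBot :=
      Tendsto.atBot_mul_const hc' tendsto_id
    have h2 : Tendsto (fun t : ℝ => t * s') atBot atBot :=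
      Tendsto.atBot_mul_const hs' tendsto_id
    have h3 := (Φ_tendsto_atBot.comp h1).mul (Φ_tendsto_atBot.comp h2)
    simpa using h3
  obtain ⟨T1, hT1⟩ := ((tendsto_order.1 hbot).2 α hα0).exists
  obtain ⟨T2, hT2⟩ := ((tendsto_order.1 htop).1 α hα1).exists
  have hT12 : T1 ≤ T2 := by
    by_contra hcon
    push_neg at hcon
    have := hmono hcon
    linarith only [hT1, hT2, this]
  obtain ⟨tstar, _, htstar⟩ :=
    intermediate_value_Icc hT12 hmcont.continuousOn ⟨hT1.le, hT2.le⟩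
  simp only [hmdef] at htstar
  refine ⟨(tstar * c', tstar * s'), ⟨htstar, (tstar * s', tstar * c'), ?_, ?_, ?_⟩, ?_⟩
  · rw [mul_comm]; exact htstar
  · show tstar * c' = tstar * s' * Real.cos β - tstar * c' * Real.sin β
    rw [id1, id2]
    linear_combination (-2*tstar*c') * hpyth
  · show tstar * s' = tstar * s' * Real.sin β + tstar * c' * Real.cos β
    rw [id1, id2]
    ring
  · rintro p ⟨hp, q, hq, he1, he2⟩
    have hq1 : q.1 = p.1 * Real.cos β + p.2 * Real.sin β := by
      linear_combination (-Real.cos β) * he1 - Real.sin β * he2 - q.1 * hsc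
    have hq2 : q.2 = -p.1 * Real.sin β + p.2 * Real.cos β := by
      linear_combination Real.sin β * he1 - Real.cos β * he2 - q.2 * hsc
    have hrr : q.1 ^ 2 + q.2 ^ 2 = p.1 ^ 2 + p.2 ^ 2 := by
      rw [hq1, hq2]
      linear_combination (p.1^2 + p.2^2) * hsc
    have claim : p.1 * s' = p.2 * c' := by
      by_cases hp0 : p.1 ^ 2 + p.2 ^ 2 = 0
      · have h1' : p.1 ^ 2 = 0 := by linarith only [hp0, sq_nonneg p.1, sq_nonneg p.2]
        have h2' : p.2 ^ 2 = 0 := by linarith only [hp0, sq_nonneg p.1, sq_nonneg p.2]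
        have h1 : p.1 = 0 := by
          exact pow_eq_zero_iff (by norm_num) |>.mp h1'
        have h2 : p.2 = 0 := by
          exact pow_eq_zero_iff (by norm_num) |>.mp h2'
        rw [h1, h2]; ring
      · have hsum : 0 < p.1 ^ 2 + p.2 ^ 2 := lt_of_le_of_ne (by positivity) (Ne.symm hp0)
        obtain ⟨r, hrdef⟩ : ∃ x : ℝ, x = Real.sqrt (p.1 ^ 2 + p.2 ^ 2) := ⟨_, rfl⟩
        have hr : 0 < r := hrdef ▸ Real.sqrt_pos.2 hsum
        have hpr : p.1 ^ 2 + p.2 ^ 2 = r ^ 2 := by rw [hrdef]; exact (Real.sq_sqrt hsum.le).symm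
        have hqr : q.1 ^ 2 + q.2 ^ 2 = r ^ 2 := by rw [hrr]; exact hpr
        have hpq : p ≠ q := by
          intro hpq
          rw [← hpq] at he1 he2
          have hzero : (p.1 ^ 2 + p.2 ^ 2) * (1 - Real.cos β) = 0 := by
            linear_combination p.1 * he1 + p.2 * he2
          linarith only [hzero, mul_pos hsum (show (0:ℝ) < 1 - Real.cos β by linarith only [hcb1])]
        have hαSp : stdNormalCDF p.2 * stdNormalCDF p.1 = α := by rw [mul_comm]; exact hp
        have hαSq : stdNormalCDF q.2 * stdNormalCDF q.1 = α := by rw [mul_comm]; exact hq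
        have hSp : (p.2, p.1) = p ∨ (p.2, p.1) = q := by
          by_contra hcon
          push_neg at hcon
          exact three_points hr p q (p.2, p.1) hpr hqr (by linear_combination hpr)
            hp hq hαSp hpq (Ne.symm hcon.1) (Ne.symm hcon.2)
        rcases hSp with hSp | hSp
        · have hd : p.2 = p.1 := congrArg Prod.fst hSp
          have hSq : (q.2, q.1) = p ∨ (q.2, q.1) = q := by
            by_contra hcon
            push_neg at hcon
            exact three_points hr p q (q.2, q.1) hpr hqr (by linear_combination hqr)
              hp hq hαSq hpq (Ne.symm hcon.1) (Ne.symm hcon.2)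
          rcases hSq with hSq | hSq
          · have e1 : q.2 = p.1 := congrArg Prod.fst hSq
            have e2 : q.1 = p.2 := congrArg Prod.snd hSq
            exact absurd (Prod.ext (by rw [e2, hd]) (by rw [e1, ← hd])).symm hpq
          · have hdq : q.2 = q.1 := congrArg Prod.fst hSq
            rw [hdq] at he1 he2
            have h2qs : q.1 * Real.sin β = 0 := by linarith only [he1, he2, hd]
            have hq10 : q.1 = 0 := (mul_eq_zero.1 h2qs).resolve_right (ne_of_gt hsb)
            have : r ^ 2 = 0 := by rw [← hqr, hq10, hdq, hq10]; ring
            exact absurd this (ne_of_gt (pow_pos hr 2))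
        · have e2 : q.2 = p.1 := (congrArg Prod.snd hSp).symm
          have hx := hq2
          rw [e2] at hx
          rw [id1, id2] at hx
          have key2 : s' * (p.1 * s' - p.2 * c') = 0 := by
            linear_combination (1/2) * hx + p.1 * hpyth
          rcases mul_eq_zero.1 key2 with h | h
          · exact absurd h (ne_of_gt hs')
          · linarith only [h]
    have hc'ne : c' ≠ 0 := ne_of_gt hc'
    have hpt1 : p.1 = (p.1 / c') * c' := by field_simp
    have hpt2 : p.2 = (p.1 / c') * s' := by
      rw [div_mul_eq_mul_div, eq_div_iff hc'ne]
      linarith only [claim]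
    have hmp : m (p.1 / c') = α := by
      simp only [hmdef]
      rw [← hpt1, ← hpt2]
      exact hp
    have htstar' : m tstar = α := by rw [hmdef]; exact htstar
    have hteq : p.1 / c' = tstar := hmono.injective (hmp.trans htstar'.symm)
    have : p = ((p.1 / c') * c', (p.1 / c') * s') := Prod.ext hpt1 hpt2
    rw [this, hteq]
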